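/- For a finite simple graph G with nonempty vertex set V, the largest H-eigenvalue λ_max^L(G^{k,k/2}) of the Laplacian tensor L(G^{k,k/2}) (the supremum of the set of H-eigenvalues of L(G^{k,k/2})) equals the largest eigenvalue of the Laplacian matrix L(G) = D(G) − A(G) of G, where A(G) is the adjacency matrix of G and D(G) the diagonal matrix of degrees. -/

import Mathlib

open scoped BigOperators
open Matrix

/-- `lam` is an eigenvalue of the Laplacian tensor `L(G^{k,k/2})` of the generalized power
hypergraph `G^{k,k/2}` with eigenvector `x`. -/
def IsLapEigenpair {V : Type*} [Fintype V] [DecidableEq V] (k s : ℕ)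
    (G : SimpleGraph V) [DecidableRel G.Adj]
    (lam : ℂ) (x : V × Fin s → ℂ) : Prop :=
  x ≠ 0 ∧ ∀ (u : V) (v : Fin s),
    ((G.degree u : ℂ) - lam) * x (u, v) ^ (k - 1) =
      ∑ w ∈ G.neighborFinset u,
        (∏ p ∈ Finset.univ.erase v, x (u, p)) * ∏ q : Fin s, x (w, q)


private lemma rayleigh_aux {V : Type*} [Fintype V] [DecidableEq V] [Nonempty V]
    {A : Matrix V V ℝ} (hA : A.IsHermitian) (z : V → ℝ) :
    z ⬝ᵥ (A *ᵥ z) ≤ (Finset.univ.sup' Finset.univ_nonempty hA.eigenvalues) * (z ⬝ᵥ z) := by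
  classical
  set lmax := Finset.univ.sup' Finset.univ_nonempty hA.eigenvalues with hl
  set U : Matrix V V ℝ := (hA.eigenvectorUnitary : Matrix V V ℝ) with hUdef
  have hsU : star U = Uᵀ := by
    rw [Matrix.star_eq_conjTranspose, Matrix.conjTranspose_eq_transpose_of_trivial]
  have hUU : U * Uᵀ = 1 := by
    rw [← hsU]; exact (Matrix.mem_unitaryGroup_iff).mp hA.eigenvectorUnitary.2
  set w : V → ℝ := Uᵀ *ᵥ z with hw
  have hdiag : Matrix.diagonal ((RCLike.ofReal : ℝ → ℝ) ∘ hA.eigenvalues)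
      = Matrix.diagonal hA.eigenvalues := by
    congr 1
  have h1 : z ⬝ᵥ (A *ᵥ z) = ∑ i, hA.eigenvalues i * (w i) ^ 2 := by
    conv_lhs => rw [hA.spectral_theorem]
    rw [Unitary.conjStarAlgAut_apply, ← hUdef]
    rw [hsU, hdiag, ← Matrix.mulVec_mulVec, ← Matrix.mulVec_mulVec,
      Matrix.dotProduct_mulVec, ← Matrix.mulVec_transpose, ← hw]
    simp only [dotProduct, Matrix.mulVec_diagonal]
    exact Finset.sum_congr rfl fun i _ => by ring
  have hz : U *ᵥ w = z := by rw [hw, Matrix.mulVec_mulVec, hUU, Matrix.one_mulVec]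
  have h2 : z ⬝ᵥ z = ∑ i, (w i) ^ 2 := by
    nth_rewrite 2 [← hz]
    rw [Matrix.dotProduct_mulVec, ← Matrix.mulVec_transpose, ← hw]
    simp [dotProduct, sq]
  rw [h1, h2, Finset.mul_sum]
  refine Finset.sum_le_sum fun i _ => ?_
  exact mul_le_mul_of_nonneg_right (Finset.le_sup' _ (Finset.mem_univ i)) (sq_nonneg _)

private lemma eigvec_exists {V : Type*} [Fintype V] [DecidableEq V] [Nonempty V]
    {A : Matrix V V ℝ} (hA : A.IsHermitian) (i : V) :
    ∃ y : V → ℝ, y ≠ 0 ∧ A *ᵥ y = hA.eigenvalues i • y := by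
  refine ⟨⇑(hA.eigenvectorBasis i), ?_, hA.mulVec_eigenvectorBasis i⟩
  have h := hA.eigenvectorBasis.orthonormal.ne_zero i
  intro hc
  exact h (by ext j; exact congrFun hc j)

private lemma construct_pair {V : Type*} [Fintype V] [DecidableEq V] (k s : ℕ)
    (hk : 4 ≤ k) (hks : k = 2 * s) (G : SimpleGraph V) [DecidableRel G.Adj]
    {lam : ℝ} {y : V → ℝ} (hy : y ≠ 0)
    (heig : (Matrix.diagonal (fun u : V => (G.degree u : ℝ)) - G.adjMatrix ℝ) *ᵥ y
      = lam • y) :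
    ∃ x : V × Fin s → ℝ, IsLapEigenpair k s G (lam : ℂ) (fun v => (x v : ℂ)) := by
  classical
  have hs2 : 2 ≤ s := by omega
  have hs0 : 0 < s := by omega
  have hsR : (s : ℝ) ≠ 0 := Nat.cast_ne_zero.2 (by omega)
  set v0 : Fin s := ⟨0, hs0⟩ with hv0
  set r : V → ℝ := fun u => Real.sign (y u) * |y u| ^ ((s : ℝ)⁻¹) with hr
  set x : V × Fin s → ℝ := fun p => if p.2 = v0 then r p.1 else |r p.1| with hxdef
  -- |r u| = |y u| ^ (1/s)
  have habs : ∀ u, |r u| = |y u| ^ ((s : ℝ)⁻¹) := by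
    intro u
    rcases lt_trichotomy (y u) 0 with h | h | h
    · rw [hr]; simp only [Real.sign_of_neg h]
      rw [abs_mul, abs_neg, abs_one, one_mul,
        abs_of_nonneg (Real.rpow_nonneg (abs_nonneg _) _)]
    · simp [hr, h, Real.sign_zero, Real.zero_rpow (inv_ne_zero hsR)]
    · rw [hr]; simp only [Real.sign_of_pos h]
      rw [abs_mul, abs_one, one_mul,
        abs_of_nonneg (Real.rpow_nonneg (abs_nonneg _) _)]
  have hrs : ∀ u, |r u| ^ s = |y u| := by
    intro u
    rw [habs, ← Real.rpow_natCast (|y u| ^ ((s : ℝ)⁻¹)) s,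
      ← Real.rpow_mul (abs_nonneg _), inv_mul_cancel₀ hsR, Real.rpow_one]
  have hrsign : ∀ u, r u = Real.sign (y u) * |r u| := by
    intro u; rw [habs, hr]
  have habsx : ∀ u (v : Fin s), |x (u, v)| = |r u| := by
    intro u v
    by_cases h : v = v0 <;> simp [hxdef, h, abs_abs]
  have hprod : ∀ u, (∏ q : Fin s, x (u, q)) = y u := by
    intro u
    rw [← Finset.mul_prod_erase Finset.univ _ (Finset.mem_univ v0)]
    have h1 : ∀ p ∈ Finset.univ.erase v0, x (u, p) = |r u| := by
      intro p hp
      simp [hxdef, (Finset.mem_erase.1 hp).1]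
    rw [Finset.prod_congr rfl h1, Finset.prod_const,
      Finset.card_erase_of_mem (Finset.mem_univ v0), Finset.card_univ,
      Fintype.card_fin]
    have : x (u, v0) = r u := by simp [hxdef]
    rw [this]
    nth_rewrite 1 [hrsign u]
    rw [mul_assoc, ← pow_succ']
    have hsm : s - 1 + 1 = s := by omega
    rw [hsm, hrs u]
    rcases lt_trichotomy (y u) 0 with h | h | h
    · rw [Real.sign_of_neg h, abs_of_neg h]; ring
    · simp [h]
    · rw [Real.sign_of_pos h, abs_of_pos h, one_mul]
  have hxk : ∀ u (v : Fin s), x (u, v) ^ k = y u ^ 2 := by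
    intro u v
    have hek : Even k := ⟨s, by omega⟩
    rw [← hek.pow_abs, habsx u v, hks, mul_comm 2 s, pow_mul, hrs u, sq_abs]
  have hxne : ∀ u, y u ≠ 0 → ∀ v : Fin s, x (u, v) ≠ 0 := by
    intro u hyu v
    have : |x (u, v)| ≠ 0 := by
      rw [habsx u v, habs u]
      exact ne_of_gt (Real.rpow_pos_of_pos (abs_pos.2 hyu) _)
    simpa [abs_ne_zero] using this
  have claim : ∀ u (v : Fin s),
      x (u, v) ^ (k - 1) = (∏ p ∈ Finset.univ.erase v, x (u, p)) * y u := by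
    intro u v
    by_cases hyu : y u = 0
    · have hru : r u = 0 := by
        have := habs u
        rw [hyu] at this
        simp only [abs_zero, Real.zero_rpow (inv_ne_zero hsR)] at this
        exact abs_eq_zero.1 this
      have hx0 : x (u, v) = 0 := by by_cases h : v = v0 <;> simp [hxdef, h, hru]
      rw [hx0, hyu, zero_pow (by omega), mul_zero]
    · apply mul_left_cancel₀ (hxne u hyu v)
      rw [← pow_succ']
      have hk1 : k - 1 + 1 = k := by omega
      rw [hk1, ← mul_assoc,
        Finset.mul_prod_erase Finset.univ (fun p => x (u, p)) (Finset.mem_univ v),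
        hprod u, hxk u v, sq]
  -- the real eigen-equation
  have hreal : ∀ u (v : Fin s),
      ((G.degree u : ℝ) - lam) * x (u, v) ^ (k - 1) =
        ∑ w ∈ G.neighborFinset u,
          (∏ p ∈ Finset.univ.erase v, x (u, p)) * ∏ q : Fin s, x (w, q) := by
    intro u v
    have hm := congrFun heig u
    rw [Matrix.sub_mulVec, Pi.sub_apply, Matrix.mulVec_diagonal,
      SimpleGraph.adjMatrix_mulVec_apply, Pi.smul_apply, smul_eq_mul] at hm
    have hsum : ∑ w ∈ G.neighborFinset u, y w = ((G.degree u : ℝ) - lam) * y u := by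
      have : (G.degree u : ℝ) * y u - ∑ w ∈ G.neighborFinset u, y w = lam * y u := hm
      linarith
    calc ((G.degree u : ℝ) - lam) * x (u, v) ^ (k - 1)
        = ((G.degree u : ℝ) - lam) * ((∏ p ∈ Finset.univ.erase v, x (u, p)) * y u) := by
          rw [claim u v]
      _ = (∏ p ∈ Finset.univ.erase v, x (u, p)) * (((G.degree u : ℝ) - lam) * y u) := by
          ring
      _ = (∏ p ∈ Finset.univ.erase v, x (u, p)) * ∑ w ∈ G.neighborFinset u, y w := by
          rw [hsum]
      _ = ∑ w ∈ G.neighborFinset u,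
          (∏ p ∈ Finset.univ.erase v, x (u, p)) * ∏ q : Fin s, x (w, q) := by
          rw [Finset.mul_sum]
          exact Finset.sum_congr rfl fun w _ => by rw [hprod w]
  refine ⟨x, ?_, ?_⟩
  · obtain ⟨u, hu⟩ := Function.ne_iff.1 hy
    intro hc
    have : (x (u, v0) : ℂ) = 0 := congrFun hc (u, v0)
    have hx0 : x (u, v0) = 0 := by exact_mod_cast this
    have : x (u, v0) ≠ 0 := hxne u hu v0
    exact this hx0
  · intro u v
    have := hreal u v
    push_cast
    exact_mod_cast congrArg (Complex.ofReal) this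

private lemma forward_quad {V : Type*} [Fintype V] [DecidableEq V] (k s : ℕ)
    (hk : 4 ≤ k) (hks : k = 2 * s) (G : SimpleGraph V) [DecidableRel G.Adj]
    {lam : ℝ} {x : V × Fin s → ℝ}
    (hpair : IsLapEigenpair k s G (lam : ℂ) (fun v => (x v : ℂ))) :
    (∃ u : V, lam = G.degree u) ∨
    (∃ y : V → ℝ, y ≠ 0 ∧
      y ⬝ᵥ ((Matrix.diagonal (fun u : V => (G.degree u : ℝ)) - G.adjMatrix ℝ) *ᵥ y)
        = lam * (y ⬝ᵥ y)) := by
  classical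
  obtain ⟨hx0, hx⟩ := hpair
  have hs0 : 0 < s := by omega
  set v0 : Fin s := ⟨0, hs0⟩ with hv0
  -- realify
  have hreal : ∀ u (v : Fin s),
      ((G.degree u : ℝ) - lam) * x (u, v) ^ (k - 1) =
        ∑ w ∈ G.neighborFinset u,
          (∏ p ∈ Finset.univ.erase v, x (u, p)) * ∏ q : Fin s, x (w, q) := by
    intro u v
    have h := hx u v
    have h2 : ((((G.degree u : ℝ) - lam) * x (u, v) ^ (k - 1) : ℝ) : ℂ) =
        ((∑ w ∈ G.neighborFinset u,
          (∏ p ∈ Finset.univ.erase v, x (u, p)) * ∏ q : Fin s, x (w, q) : ℝ) : ℂ) := by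
      push_cast
      exact h
    exact_mod_cast h2
  set y : V → ℝ := fun u => ∏ q : Fin s, x (u, q) with hy
  set S : V → ℝ := fun u => ∑ w ∈ G.neighborFinset u, y w with hS
  have hkey : ∀ u (v : Fin s),
      ((G.degree u : ℝ) - lam) * x (u, v) ^ k = y u * S u := by
    intro u v
    have h := congrArg (fun t => x (u, v) * t) (hreal u v)
    have h0 : x (u, v) ^ k = x (u, v) * x (u, v) ^ (k - 1) := by
      conv_lhs => rw [show k = (k - 1) + 1 by omega]
      rw [pow_succ']
    calc ((G.degree u : ℝ) - lam) * x (u, v) ^ k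
        = x (u, v) * (((G.degree u : ℝ) - lam) * x (u, v) ^ (k - 1)) := by
          rw [h0]; ring
      _ = x (u, v) * ∑ w ∈ G.neighborFinset u,
            (∏ p ∈ Finset.univ.erase v, x (u, p)) * ∏ q : Fin s, x (w, q) := h
      _ = y u * S u := by
          show _ = y u * ∑ w ∈ G.neighborFinset u, y w
          rw [Finset.mul_sum, Finset.mul_sum]
          refine Finset.sum_congr rfl fun w _ => ?_
          rw [← mul_assoc,
            Finset.mul_prod_erase Finset.univ (fun p => x (u, p)) (Finset.mem_univ v)]
  by_cases hcase : ∃ u, ∃ v : Fin s, x (u, v) ≠ 0 ∧ y u = 0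
  · obtain ⟨u, v, hxv, hyu⟩ := hcase
    left
    refine ⟨u, ?_⟩
    have h := hkey u v
    rw [hyu, zero_mul] at h
    have hxk : x (u, v) ^ k ≠ 0 := pow_ne_zero _ hxv
    have : (G.degree u : ℝ) - lam = 0 := by
      rcases mul_eq_zero.1 h with h' | h'
      · exact h'
      · exact absurd h' hxk
    linarith [this]
  · right
    push_neg at hcase
    have hquad : ∀ u, ((G.degree u : ℝ) - lam) * y u ^ 2 = y u * S u := by
      intro u
      by_cases hyu : y u = 0
      · rw [hyu]; ring
      · have hxv : ∀ v : Fin s, x (u, v) ≠ 0 := by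
          intro v hv
          exact hyu (Finset.prod_eq_zero (Finset.mem_univ v) hv)
        by_cases hdl : (G.degree u : ℝ) = lam
        · have h := hkey u v0
          rw [hdl, sub_self, zero_mul] at h
          rw [hdl, sub_self, zero_mul, ← h]
        · have hne : (G.degree u : ℝ) - lam ≠ 0 := sub_ne_zero.2 hdl
          have hconst : ∀ v : Fin s, x (u, v) ^ 2 = x (u, v0) ^ 2 := by
            intro v
            have h1 : x (u, v) ^ k = x (u, v0) ^ k :=
              mul_left_cancel₀ hne ((hkey u v).trans (hkey u v0).symm)
            have h2 : (x (u, v) ^ 2) ^ s = (x (u, v0) ^ 2) ^ s := by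
              rw [← pow_mul, ← pow_mul, ← hks]
              exact h1
            exact (pow_left_inj₀ (sq_nonneg _) (sq_nonneg _) (by omega)).1 h2
          have hy2 : y u ^ 2 = x (u, v0) ^ k := by
            rw [hy]
            simp only
            rw [← Finset.prod_pow]
            rw [Finset.prod_congr rfl fun v _ => hconst v, Finset.prod_const,
              Finset.card_univ, Fintype.card_fin, ← pow_mul, ← hks]
          rw [hy2]
          exact hkey u v0
    -- y ≠ 0
    have hyne : y ≠ 0 := by
      obtain ⟨p, hp⟩ := Function.ne_iff.1 hx0
      have hxp : x p ≠ 0 := by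
        intro h; apply hp; simp [h]
      intro hc
      exact hcase p.1 p.2 hxp (congrFun hc p.1)
    refine ⟨y, hyne, ?_⟩
    have hcoord : ∀ u, ((Matrix.diagonal (fun u : V => (G.degree u : ℝ))
        - G.adjMatrix ℝ) *ᵥ y) u = (G.degree u : ℝ) * y u - S u := by
      intro u
      rw [Matrix.sub_mulVec, Pi.sub_apply, Matrix.mulVec_diagonal,
        SimpleGraph.adjMatrix_mulVec_apply]
    simp only [dotProduct]
    rw [Finset.mul_sum]
    refine Finset.sum_congr rfl fun u _ => ?_
    rw [hcoord u]
    linear_combination hquad u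

/-- The largest `H`-eigenvalue of the Laplacian tensor `L(G^{k,k/2})` equals the largest
eigenvalue of the Laplacian matrix `L(G) = D(G) − A(G)` of the simple graph `G`. -/
theorem stmt9 {V : Type*} [Fintype V] [DecidableEq V] [Nonempty V] (k s : ℕ)
    (hk : 4 ≤ k) (hks : k = 2 * s) (G : SimpleGraph V) [DecidableRel G.Adj] :
    sSup {lam : ℝ | ∃ x : V × Fin s → ℝ,
        IsLapEigenpair k s G (lam : ℂ) (fun v => (x v : ℂ))} =
      sSup {lam : ℝ | ∃ y : V → ℝ, y ≠ 0 ∧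
        (Matrix.diagonal (fun u : V => (G.degree u : ℝ)) - G.adjMatrix ℝ) *ᵥ y
          = lam • y} := by
  classical
  set L : Matrix V V ℝ :=
    Matrix.diagonal (fun u : V => (G.degree u : ℝ)) - G.adjMatrix ℝ with hLdef
  have hL : L.IsHermitian := by
    rw [Matrix.IsHermitian, Matrix.conjTranspose_eq_transpose_of_trivial,
      Matrix.transpose_sub, Matrix.diagonal_transpose, SimpleGraph.transpose_adjMatrix]
  set lmax : ℝ := Finset.univ.sup' Finset.univ_nonempty hL.eigenvalues with hlmax
  set S₁ : Set ℝ := {lam : ℝ | ∃ x : V × Fin s → ℝ,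
      IsLapEigenpair k s G (lam : ℂ) (fun v => (x v : ℂ))} with hS₁
  set S₂ : Set ℝ := {lam : ℝ | ∃ y : V → ℝ, y ≠ 0 ∧ L *ᵥ y = lam • y} with hS₂
  -- Rayleigh bound for every vector
  have hray : ∀ z : V → ℝ, z ⬝ᵥ (L *ᵥ z) ≤ lmax * (z ⬝ᵥ z) := fun z => rayleigh_aux hL z
  -- lmax ∈ S₂
  have hmem2 : lmax ∈ S₂ := by
    obtain ⟨i, -, hi⟩ := Finset.exists_mem_eq_sup' (Finset.univ_nonempty (α := V))
      hL.eigenvalues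
    obtain ⟨y, hy0, hy⟩ := eigvec_exists hL i
    exact ⟨y, hy0, by rw [hy, hlmax, hi]⟩
  -- S₂ is bounded above by lmax
  have hub2 : ∀ lam ∈ S₂, lam ≤ lmax := by
    rintro lam ⟨y, hy0, hy⟩
    have bdd := hray y
    rw [hy, dotProduct_smul, smul_eq_mul] at bdd
    have hyy : 0 < y ⬝ᵥ y := by
      have hnn : 0 ≤ y ⬝ᵥ y := Finset.sum_nonneg fun i _ => mul_self_nonneg _
      rcases lt_or_eq_of_le hnn with h | h
      · exact h
      · exact absurd ((dotProduct_self_eq_zero).1 h.symm) hy0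
    exact le_of_mul_le_mul_right bdd hyy
  -- every degree is at most lmax
  have hdeg : ∀ u : V, (G.degree u : ℝ) ≤ lmax := by
    intro u
    have h := hray (Pi.single u 1)
    have h1 : Pi.single u 1 ⬝ᵥ (L *ᵥ Pi.single u 1) = (G.degree u : ℝ) := by
      rw [single_dotProduct, one_mul, Matrix.mulVec_single]
      simp [hLdef, Matrix.sub_apply]
    have h2 : (Pi.single u 1 : V → ℝ) ⬝ᵥ Pi.single u 1 = 1 := by
      rw [single_dotProduct, one_mul, Pi.single_eq_same]
    rw [h1, h2, mul_one] at h
    exact h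
  -- S₁ is bounded above by lmax
  have hub1 : ∀ lam ∈ S₁, lam ≤ lmax := by
    rintro lam ⟨x, hx⟩
    rcases forward_quad k s hk hks G hx with ⟨u, hu⟩ | ⟨y, hy0, hy⟩
    · exact hu ▸ hdeg u
    · have bdd := hray y
      rw [hy] at bdd
      have hyy : 0 < y ⬝ᵥ y := by
        have hnn : 0 ≤ y ⬝ᵥ y := Finset.sum_nonneg fun i _ => mul_self_nonneg _
        rcases lt_or_eq_of_le hnn with h | h
        · exact h
        · exact absurd ((dotProduct_self_eq_zero).1 h.symm) hy0
      exact le_of_mul_le_mul_right bdd hyy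
  -- lmax ∈ S₁
  have hmem1 : lmax ∈ S₁ := by
    obtain ⟨y, hy0, hy⟩ := hmem2
    exact construct_pair k s hk hks G hy0 hy
  rw [IsGreatest.csSup_eq ⟨hmem1, hub1⟩, IsGreatest.csSup_eq ⟨hmem2, hub2⟩]
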